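/- (Generalized Motzkin–Straus) Let k ≤ n be positive integers and let G be a simple graph on vertex set {1,…,n} whose clique number satisfies ω(G) ≥ k. Then the maximum of f(x) = Σ_{(i,j)∈E} x_i x_j over Δ_{k,n} equals k²(1 − 1/ω(G)), and this maximum is attained. -/

import Mathlib

open BigOperators Finset

namespace MotzkinStrausAux

variable {n : ℕ} (G : SimpleGraph (Fin n)) [DecidableRel G.Adj]

/-- Bilinear form associated to the adjacency of `G`. -/
def B (x y : Fin n → ℝ) : ℝ := ∑ i, ∑ j, if G.Adj i j then x i * y j else 0

/-- Weighted neighborhood sum. -/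
def M (x : Fin n → ℝ) (w : Fin n) : ℝ := ∑ i, if G.Adj i w then x i else 0

lemma B_comm (x y : Fin n → ℝ) : B G x y = B G y x := by
  unfold B
  rw [Finset.sum_comm]
  refine Finset.sum_congr rfl fun j _ => Finset.sum_congr rfl fun i _ => ?_
  by_cases h : G.Adj i j
  · rw [if_pos h, if_pos h.symm, mul_comm]
  · rw [if_neg h, if_neg (fun h' => h h'.symm)]

lemma B_add_right (x y z : Fin n → ℝ) : B G x (y + z) = B G x y + B G x z := by
  unfold B
  rw [← Finset.sum_add_distrib]
  refine Finset.sum_congr rfl fun i _ => ?_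
  rw [← Finset.sum_add_distrib]
  refine Finset.sum_congr rfl fun j _ => ?_
  simp only [Pi.add_apply]
  split <;> ring

lemma B_add_left (x y z : Fin n → ℝ) : B G (x + y) z = B G x z + B G y z := by
  rw [B_comm, B_add_right, B_comm G z x, B_comm G z y]

lemma B_single_right (x : Fin n → ℝ) (u : Fin n) (t : ℝ) :
    B G x (Pi.single u t) = t * M G x u := by
  unfold B M
  have h : ∀ i, (∑ j, if G.Adj i j then x i * (Pi.single u t : Fin n → ℝ) j else 0)
      = if G.Adj i u then x i * t else 0 := by
    intro i
    rw [Finset.sum_eq_single u]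
    · simp
    · intro j _ hj; simp [Pi.single_apply, hj]
    · simp
  simp only [h]
  rw [Finset.mul_sum]
  refine Finset.sum_congr rfl fun i _ => ?_
  split <;> ring

lemma M_add (x y : Fin n → ℝ) (w : Fin n) : M G (x + y) w = M G x w + M G y w := by
  unfold M
  rw [← Finset.sum_add_distrib]
  refine Finset.sum_congr rfl fun i _ => ?_
  simp only [Pi.add_apply]
  split <;> simp

lemma M_single (u : Fin n) (t : ℝ) (w : Fin n) :
    M G (Pi.single u t) w = if G.Adj u w then t else 0 := by
  unfold M
  rw [Finset.sum_eq_single u]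
  · simp
  · intro j _ hj; simp [Pi.single_apply, hj]
  · simp

/-- If the support of `x` is a clique, the quadratic form is `(∑ x)² - ∑ x²`. -/
lemma B_self_of_clique_support (x : Fin n → ℝ)
    (hcl : ∀ i j, x i ≠ 0 → x j ≠ 0 → i ≠ j → G.Adj i j) :
    B G x x = (∑ i, x i) ^ 2 - ∑ i, (x i) ^ 2 := by
  have key : ∀ i j : Fin n, (if G.Adj i j then x i * x j else 0)
      = x i * x j - (if i = j then x i * x j else 0) := by
    intro i j
    by_cases hij : i = j
    · subst hij; simp [G.irrefl]
    · by_cases ha : G.Adj i j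
      · simp [ha, hij]
      · have hz : x i * x j = 0 := by
          by_cases hxi : x i = 0
          · simp [hxi]
          · by_cases hxj : x j = 0
            · simp [hxj]
            · exact absurd (hcl i j hxi hxj hij) ha
        simp [ha, hij, hz]
  unfold B
  simp only [key]
  rw [Finset.sum_congr rfl fun i _ => Finset.sum_sub_distrib _ _, Finset.sum_sub_distrib]
  congr 1
  · rw [sq, Finset.sum_mul_sum]
  · refine Finset.sum_congr rfl fun i _ => ?_
    rw [Finset.sum_ite_eq]
    simp [sq]

variable {G}

/-- Upper bound: induction on the size of the support. -/
lemma upper_bound (k : ℕ) (hk : 0 < k) (hω : k ≤ G.cliqueNum) :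
    ∀ (m : ℕ) (x : Fin n → ℝ), (∀ i, 0 ≤ x i) →
      (Finset.univ.filter fun i => x i ≠ 0).card ≤ m → (∑ i, x i) = (k : ℝ) →
      B G x x ≤ (k : ℝ) ^ 2 * (1 - 1 / (G.cliqueNum : ℝ)) := by
  have hωpos : 0 < (G.cliqueNum : ℝ) := by
    exact_mod_cast lt_of_lt_of_le hk hω
  intro m
  induction m with
  | zero =>
    intro x hx hcard hsum
    exfalso
    have hzero : ∀ i, x i = 0 := by
      intro i
      by_contra h
      have hi : i ∈ Finset.univ.filter fun i => x i ≠ 0 := by simp [h]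
      have := Finset.card_pos.mpr ⟨i, hi⟩
      omega
    rw [Finset.sum_congr rfl fun i _ => hzero i] at hsum
    simp at hsum
    exact absurd hsum.symm (by positivity)
  | succ m ih =>
    intro x hx hcard hsum
    by_cases hcl : ∀ i j, x i ≠ 0 → x j ≠ 0 → i ≠ j → G.Adj i j
    · -- clique support case
      rw [B_self_of_clique_support G x hcl, hsum]
      set S := Finset.univ.filter fun i => x i ≠ 0 with hS
      have hSclique : G.IsClique (S : Set (Fin n)) := by
        intro i hi j hj hij
        exact hcl i j (by simpa [hS] using hi) (by simpa [hS] using hj) hij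
      have hScard : (S.card : ℝ) ≤ (G.cliqueNum : ℝ) := by
        exact_mod_cast SimpleGraph.IsClique.card_le_cliqueNum (tc := hSclique)
      have hsum' : (∑ i ∈ S, x i) = (k : ℝ) := by
        rw [hS, Finset.sum_filter_ne_zero, hsum]
      have hcs : ((k : ℝ)) ^ 2 ≤ (S.card : ℝ) * ∑ i ∈ S, (x i) ^ 2 := by
        rw [← hsum']
        exact sq_sum_le_card_mul_sum_sq (s := S) (f := x)
      have hsub : (∑ i ∈ S, (x i) ^ 2) ≤ ∑ i, (x i) ^ 2 := by
        apply Finset.sum_le_sum_of_subset_of_nonneg (Finset.subset_univ S)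
        intro i _ _; positivity
      have hsq : (k : ℝ) ^ 2 / (G.cliqueNum : ℝ) ≤ ∑ i, (x i) ^ 2 := by
        have hsum2nonneg : (0 : ℝ) ≤ ∑ i ∈ S, (x i) ^ 2 := by positivity
        have h1 : (k : ℝ) ^ 2 ≤ (G.cliqueNum : ℝ) * ∑ i, (x i) ^ 2 := by
          calc (k : ℝ) ^ 2 ≤ (S.card : ℝ) * ∑ i ∈ S, (x i) ^ 2 := hcs
            _ ≤ (G.cliqueNum : ℝ) * ∑ i, (x i) ^ 2 :=
                mul_le_mul hScard hsub hsum2nonneg (le_of_lt hωpos)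
        rw [div_le_iff₀ hωpos]
        linarith [h1]
      have heq : (k : ℝ) ^ 2 * (1 - 1 / (G.cliqueNum : ℝ))
          = (k : ℝ) ^ 2 - (k : ℝ) ^ 2 / (G.cliqueNum : ℝ) := by
        field_simp
      rw [heq]
      linarith
    · push_neg at hcl
      obtain ⟨u₀, v₀, hxu₀, hxv₀, huv₀, hadj₀⟩ := hcl
      have key : ∀ u v : Fin n, x u ≠ 0 → x v ≠ 0 → u ≠ v → ¬ G.Adj u v →
          M G x v ≤ M G x u →
          B G x x ≤ (k : ℝ) ^ 2 * (1 - 1 / (G.cliqueNum : ℝ)) := by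
        intro u v hxu hxv huv hadj hM
        obtain ⟨y, hy⟩ : ∃ y : Fin n → ℝ,
            y = Pi.single u (x v) + Pi.single v (-(x v)) := ⟨_, rfl⟩
        have htpos : 0 < x v := lt_of_le_of_ne (hx v) (Ne.symm hxv)
        have hadj' : ¬ G.Adj v u := fun h => hadj h.symm
        have hyu : y u = x v := by
          rw [hy]; simp [Pi.single_apply, huv, Ne.symm huv]
        have hyv : y v = -(x v) := by
          rw [hy]; simp [Pi.single_apply, huv, Ne.symm huv]
        have hyother : ∀ i, i ≠ u → i ≠ v → y i = 0 := by
          intro i hiu hiv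
          rw [hy]; simp [Pi.single_apply, hiu, hiv]
        have hBxy : B G x y = x v * (M G x u - M G x v) := by
          rw [hy, B_add_right, B_single_right, B_single_right]
          ring
        have hMyu : M G y u = 0 := by
          rw [hy, M_add, M_single, M_single]
          simp [G.irrefl, hadj']
        have hMyv : M G y v = 0 := by
          rw [hy, M_add, M_single, M_single]
          simp [G.irrefl, hadj]
        have hByy : B G y y = 0 := by
          have h1 : B G y y = x v * M G y u + -(x v) * M G y v := by
            rw [hy, B_add_right, B_single_right, B_single_right]
          rw [h1, hMyu, hMyv]
          ring
        have hexp : B G (x + y) (x + y) = B G x x + 2 * B G x y := by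
          have h1 := B_add_right G (x + y) x y
          have h2 := B_add_left G x y x
          have h3 := B_add_left G x y y
          have h4 := B_comm G y x
          linarith [hByy]
        have hle : B G x x ≤ B G (x + y) (x + y) := by
          rw [hexp, hBxy]
          nlinarith [htpos.le, hM]
        refine le_trans hle (ih (x + y) ?_ ?_ ?_)
        · intro i
          by_cases hiu : i = u
          · rw [hiu]
            simp only [Pi.add_apply, hyu]
            linarith [hx u, htpos.le]
          · by_cases hiv : i = v
            · rw [hiv]
              simp only [Pi.add_apply, hyv]
              linarith
            · simp only [Pi.add_apply, hyother i hiu hiv, add_zero]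
              exact hx i
        · have hsubset : (Finset.univ.filter fun i => (x + y) i ≠ 0)
              ⊆ (Finset.univ.filter fun i => x i ≠ 0).erase v := by
            intro i hi
            simp only [Finset.mem_filter, Finset.mem_univ, true_and] at hi
            have hiv : i ≠ v := by
              intro hiv
              apply hi
              subst hiv
              simp [Pi.add_apply, hyv]
            rw [Finset.mem_erase]
            refine ⟨hiv, ?_⟩
            simp only [Finset.mem_filter, Finset.mem_univ, true_and]
            by_cases hiu : i = u
            · subst hiu; exact hxu
            · intro hxi
              apply hi
              simp [Pi.add_apply, hyother i hiu hiv, hxi]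
          have hvmem : v ∈ Finset.univ.filter fun i => x i ≠ 0 := by simp [hxv]
          calc (Finset.univ.filter fun i => (x + y) i ≠ 0).card
              ≤ ((Finset.univ.filter fun i => x i ≠ 0).erase v).card :=
                Finset.card_le_card hsubset
            _ = (Finset.univ.filter fun i => x i ≠ 0).card - 1 :=
                Finset.card_erase_of_mem hvmem
            _ ≤ m := by
                have := Finset.card_pos.mpr ⟨v, hvmem⟩
                omega
        · have h1 : (∑ i, y i) = 0 := by
            rw [hy]
            simp only [Pi.add_apply]
            rw [Finset.sum_add_distrib, Fintype.sum_pi_single', Fintype.sum_pi_single']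
            ring
          simp only [Pi.add_apply]
          rw [Finset.sum_add_distrib, hsum, h1, add_zero]
      rcases le_total (M G x v₀) (M G x u₀) with h | h
      · exact key u₀ v₀ hxu₀ hxv₀ huv₀ hadj₀ h
      · exact key v₀ u₀ hxv₀ hxu₀ huv₀.symm (fun hh => hadj₀ hh.symm) h

end MotzkinStrausAux

open MotzkinStrausAux

theorem generalized_motzkin_straus (n k : ℕ) (hk : 0 < k) (hkn : k ≤ n)
    (G : SimpleGraph (Fin n)) [DecidableRel G.Adj] (hω : k ≤ G.cliqueNum) :
    IsGreatest
      {v : ℝ | ∃ x : Fin n → ℝ, (∀ i, 0 ≤ x i ∧ x i ≤ 1) ∧ (∑ i, x i) = (k : ℝ) ∧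
        v = ∑ i, ∑ j, if G.Adj i j then x i * x j else 0}
      ((k : ℝ) ^ 2 * (1 - 1 / (G.cliqueNum : ℝ))) := by
  have hωnat : 0 < G.cliqueNum := lt_of_lt_of_le hk hω
  have hωpos : 0 < (G.cliqueNum : ℝ) := by exact_mod_cast hωnat
  have hkpos : 0 < (k : ℝ) := by exact_mod_cast hk
  constructor
  · -- membership: the optimum is attained
    obtain ⟨S, hS⟩ := G.exists_isNClique_cliqueNum
    have hcard : (S.card : ℝ) = (G.cliqueNum : ℝ) := by exact_mod_cast hS.card_eq
    set c : ℝ := (k : ℝ) / (G.cliqueNum : ℝ) with hc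
    have hcω : c ≤ 1 := by
      rw [hc, div_le_one hωpos]
      exact_mod_cast hω
    have hcpos : 0 < c := by rw [hc]; positivity
    refine ⟨fun i => if i ∈ S then c else 0, fun i => ?_, ?_, ?_⟩
    · by_cases hiS : i ∈ S
      · exact ⟨by simp [hiS, hcpos.le], by simp [hiS, hcω]⟩
      · exact ⟨by simp [hiS], by simp [hiS]⟩
    · show (∑ i, if i ∈ S then c else 0) = (k : ℝ)
      rw [Finset.sum_ite_mem, Finset.univ_inter, Finset.sum_const, nsmul_eq_mul, hcard, hc]
      field_simp
    · set x : Fin n → ℝ := fun i => if i ∈ S then c else 0 with hx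
      have hsum : (∑ i, x i) = (k : ℝ) := by
        rw [hx]
        rw [Finset.sum_ite_mem, Finset.univ_inter, Finset.sum_const, nsmul_eq_mul, hcard, hc]
        field_simp
      have hsupp : ∀ i j, x i ≠ 0 → x j ≠ 0 → i ≠ j → G.Adj i j := by
        intro i j hi hj hij
        have hiS : i ∈ S := by
          by_contra h; apply hi; rw [hx]; simp [h]
        have hjS : j ∈ S := by
          by_contra h; apply hj; rw [hx]; simp [h]
        exact hS.isClique hiS hjS hij
      have hsq : (∑ i, (x i) ^ 2) = (k : ℝ) ^ 2 / (G.cliqueNum : ℝ) := by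
        have hval : ∀ i, (x i) ^ 2 = if i ∈ S then c ^ 2 else 0 := by
          intro i; rw [hx]; dsimp only; split <;> simp
        rw [Finset.sum_congr rfl fun i _ => hval i]
        rw [Finset.sum_ite_mem, Finset.univ_inter, Finset.sum_const, nsmul_eq_mul, hcard, hc]
        field_simp
      show _ = B G x x
      rw [B_self_of_clique_support G x hsupp, hsum, hsq]
      field_simp
  · rintro v ⟨x, hx, hsum, rfl⟩
    have hB : (∑ i, ∑ j, if G.Adj i j then x i * x j else 0) = B G x x := rfl
    rw [hB]
    refine upper_bound k hk hω n x (fun i => (hx i).1) ?_ hsum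
    calc (Finset.univ.filter fun i => x i ≠ 0).card ≤ Finset.univ.card :=
          Finset.card_le_card (Finset.subset_univ _)
      _ = n := by simp
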